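/- r̃(2) = 4; that is, the tilde-system of order (2, 4) admits no non-trivial solution, while the tilde-system of order (2, 3) does admit a non-trivial solution (for instance p₁ = p₂ = 1, q_{1,l} = q_{2,l} = q_{3,l} = 0 for l = 1,2, q_{4,1} = 1, q_{4,2} = −1, q_{5,1} = q_{5,2} = −1/2). -/

import Mathlib

/-- The index set `J_{ℓ₁,ℓ₂} = {α ∈ ℕ⁵ : α₁+2α₂+α₃ = ℓ₁, α₃+α₄+2α₅ = ℓ₂}`
(as a finite set of quintuples). -/
def Jset (l1 l2 : ℕ) : Finset (ℕ × ℕ × ℕ × ℕ × ℕ) :=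
  (Finset.range (l1 + 1) ×ˢ Finset.range (l1 + 1) ×ˢ Finset.range (l1 + 1) ×ˢ
      Finset.range (l2 + 1) ×ˢ Finset.range (l2 + 1)).filter
    (fun α => α.1 + 2 * α.2.1 + α.2.2.1 = l1 ∧ α.2.2.1 + α.2.2.2.1 + 2 * α.2.2.2.2 = l2)

/-- The `(ℓ₁, ℓ₂)`-equation of the tilde-system:
`Σ_{l=1}^m Σ_{α ∈ J_{ℓ₁,ℓ₂}} p_l² q_{1,l}^{α₁} ⋯ q_{5,l}^{α₅} / (α₁!⋯α₅!)`. -/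
noncomputable def tildeEq (m : ℕ) (p q1 q2 q3 q4 q5 : Fin m → ℝ) (l1 l2 : ℕ) : ℝ :=
  ∑ l : Fin m, ∑ α ∈ Jset l1 l2,
    p l ^ 2 * q1 l ^ α.1 * q2 l ^ α.2.1 * q3 l ^ α.2.2.1 * q4 l ^ α.2.2.2.1 *
        q5 l ^ α.2.2.2.2 /
      ((α.1.factorial : ℝ) * (α.2.1.factorial : ℝ) * (α.2.2.1.factorial : ℝ) *
        (α.2.2.2.1.factorial : ℝ) * (α.2.2.2.2.factorial : ℝ))

/-- The tilde-system of order `(m, r)` admits a non-trivial solution: there are reals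
`p_l, q_{1,l}, …, q_{5,l}` with all `p_l ≠ 0` and some `q_{4,l} ≠ 0` satisfying the
equations for all `ℓ₁, ℓ₂ ≥ 0` with `1 ≤ ℓ₁ + ℓ₂ ≤ r`. -/
def tildeSol (m r : ℕ) : Prop :=
  ∃ p q1 q2 q3 q4 q5 : Fin m → ℝ,
    (∀ l, p l ≠ 0) ∧ (∃ l, q4 l ≠ 0) ∧
    ∀ l1 l2 : ℕ, 1 ≤ l1 + l2 → l1 + l2 ≤ r → tildeEq m p q1 q2 q3 q4 q5 l1 l2 = 0

/-- `r̃(m)`: the smallest positive integer `r` such that the tilde-system of order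
`(m, r)` admits no non-trivial solution. -/
noncomputable def rtilde (m : ℕ) : ℕ := sInf {r : ℕ | 1 ≤ r ∧ ¬ tildeSol m r}

lemma JE01 : Jset 0 1 = {(0,0,0,1,0)} := by decide
lemma JE02 : Jset 0 2 = {(0,0,0,0,1),(0,0,0,2,0)} := by decide
lemma JE03 : Jset 0 3 = {(0,0,0,1,1),(0,0,0,3,0)} := by decide
lemma JE04 : Jset 0 4 = {(0,0,0,0,2),(0,0,0,2,1),(0,0,0,4,0)} := by decide
lemma JE10 : Jset 1 0 = {(1,0,0,0,0)} := by decide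
lemma JE11 : Jset 1 1 = {(0,0,1,0,0),(1,0,0,1,0)} := by decide
lemma JE20 : Jset 2 0 = {(0,1,0,0,0),(2,0,0,0,0)} := by decide
lemma JE12 : Jset 1 2 = {(0,0,1,1,0),(1,0,0,0,1),(1,0,0,2,0)} := by decide
lemma JE21 : Jset 2 1 = {(0,1,0,1,0),(1,0,1,0,0),(2,0,0,1,0)} := by decide
lemma JE30 : Jset 3 0 = {(1,1,0,0,0),(3,0,0,0,0)} := by decide

/-- Core algebraic impossibility for the order-(2,4) tilde-system. -/
lemma key_alg (a b u v w x : ℝ) (ha : 0 < a) (hb : 0 < b)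
    (e1 : a*u + b*w = 0)
    (e2 : a*(u^2/2+v) + b*(w^2/2+x) = 0)
    (e3 : a*(u^3/6+u*v) + b*(w^3/6+w*x) = 0)
    (e4 : a*(u^4/24+u^2*v/2+v^2/2) + b*(w^4/24+w^2*x/2+x^2/2) = 0) :
    u = 0 ∧ w = 0 := by
  have hu : u = 0 := by
    by_contra hu
    have hw : w ≠ 0 := by
      intro h; rw [h] at e1
      have : a * u = 0 := by linarith
      exact hu ((mul_eq_zero.1 this).resolve_left ha.ne')
    have huw : u ≠ w := by
      intro h; rw [h] at e1
      have : (a+b)*w = 0 := by linarith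
      exact hw ((mul_eq_zero.1 this).resolve_left (by positivity))
    have h3 : (a*(u^2/2+v))*(u-w) = (a*u*(u+w)/3)*(u-w) := by
      linear_combination e3 - w*e2 + (w^2/3)*e1
    have h3' : a*(u^2/2+v) = a*u*(u+w)/3 :=
      mul_right_cancel₀ (sub_ne_zero.mpr huw) h3
    have h4 : 6*(a+b)*(a*(u^2/2+v))^2 = a^2*b*u*(u^3-w^3) := by
      linear_combination 12*a*b*e4 + (6*a*(a*(u^2/2+v) - b*(w^2/2+x)))*e2 + a*b*w^3*e1
    rw [h3'] at h4
    have hau : a^2*u ≠ 0 := by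
      intro h; exact hu ((mul_eq_zero.1 h).resolve_left (by positivity))
    have h5 : (2*(a+b)*u*(u+w)^2) * (a^2*u) = (3*b*(u^3-w^3)) * (a^2*u) := by
      linear_combination 3*h4
    have h5' := mul_right_cancel₀ hau h5
    have hwv : w = -(a*u)/b := by
      field_simp
      linarith
    rw [hwv] at h5'
    have hb3 : (b:ℝ)^3 ≠ 0 := by positivity
    have h6 : (2*(a+b)*(b-a)^2) * (u^3*b^3) = (3*(a^3+b^3)) * (u^3*b^3) := by
      field_simp at h5'
      linear_combination (u^3*b^3) * h5'
    have h7 : 2*(a+b)*(b-a)^2 = 3*(a^3+b^3) :=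
      mul_right_cancel₀ (mul_ne_zero (pow_ne_zero 3 hu) hb3) h6
    nlinarith [mul_pos ha hb, sq_nonneg (a-b), sq_nonneg (a+b)]
  refine ⟨hu, ?_⟩
  rw [hu] at e1
  have : b*w = 0 := by linarith
  exact (mul_eq_zero.1 this).resolve_left hb.ne'

lemma not_tildeSol_two_four : ¬ tildeSol 2 4 := by
  rintro ⟨p, q1, q2, q3, q4, q5, hp, ⟨l, hl⟩, h⟩
  have ha : (0:ℝ) < p 0 ^ 2 :=
    lt_of_le_of_ne (sq_nonneg _) (Ne.symm (pow_ne_zero 2 (hp 0)))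
  have hb : (0:ℝ) < p 1 ^ 2 :=
    lt_of_le_of_ne (sq_nonneg _) (Ne.symm (pow_ne_zero 2 (hp 1)))
  have e1 : p 0^2*(q4 0) + p 1^2*(q4 1) = 0 := by
    have h' := h 0 1 (by norm_num) (by norm_num)
    unfold tildeEq at h'
    rw [JE01, Fin.sum_univ_two, Finset.sum_singleton, Finset.sum_singleton] at h'
    norm_num [Nat.factorial] at h'
    linear_combination h'
  have e2 : p 0^2*((q4 0)^2/2 + q5 0) + p 1^2*((q4 1)^2/2 + q5 1) = 0 := by
    have h' := h 0 2 (by norm_num) (by norm_num)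
    unfold tildeEq at h'
    rw [JE02, Fin.sum_univ_two, Finset.sum_insert (by decide), Finset.sum_singleton,
      Finset.sum_insert (by decide), Finset.sum_singleton] at h'
    norm_num [Nat.factorial] at h'
    linear_combination h'
  have e3 : p 0^2*((q4 0)^3/6 + q4 0 * q5 0) + p 1^2*((q4 1)^3/6 + q4 1 * q5 1) = 0 := by
    have h' := h 0 3 (by norm_num) (by norm_num)
    unfold tildeEq at h'
    rw [JE03, Fin.sum_univ_two, Finset.sum_insert (by decide), Finset.sum_singleton,
      Finset.sum_insert (by decide), Finset.sum_singleton] at h'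
    norm_num [Nat.factorial] at h'
    linear_combination h'
  have e4 : p 0^2*((q4 0)^4/24 + (q4 0)^2*(q5 0)/2 + (q5 0)^2/2)
      + p 1^2*((q4 1)^4/24 + (q4 1)^2*(q5 1)/2 + (q5 1)^2/2) = 0 := by
    have h' := h 0 4 (by norm_num) (by norm_num)
    unfold tildeEq at h'
    rw [JE04, Fin.sum_univ_two, Finset.sum_insert (by decide),
      Finset.sum_insert (by decide), Finset.sum_singleton,
      Finset.sum_insert (by decide), Finset.sum_insert (by decide),
      Finset.sum_singleton] at h'
    norm_num [Nat.factorial] at h'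
    linear_combination h'
  obtain ⟨h0, h1⟩ := key_alg _ _ _ _ _ _ ha hb e1 e2 e3 e4
  fin_cases l
  · exact hl h0
  · exact hl h1

lemma tildeSol_two_three : tildeSol 2 3 := by
  refine ⟨fun _ => 1, fun _ => 0, fun _ => 0, fun _ => 0, ![1, -1], fun _ => -(1/2),
    fun _ => one_ne_zero, ⟨0, by norm_num⟩, ?_⟩
  intro l1 l2 h1 h2
  have hl1 : l1 ≤ 3 := by omega
  have hl2 : l2 ≤ 3 := by omega
  interval_cases l1 <;> interval_cases l2 <;>
    first
      | omega
      | (unfold tildeEq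
         simp only [JE01, JE02, JE03, JE10, JE11, JE20, JE12, JE21, JE30, Fin.sum_univ_two]
         repeat rw [Finset.sum_insert (by decide)]
         repeat rw [Finset.sum_singleton]
         norm_num [Nat.factorial])

theorem rtilde_two_eq_four : rtilde 2 = 4 ∧ ¬ tildeSol 2 4 ∧ tildeSol 2 3 := by
  refine ⟨?_, not_tildeSol_two_four, tildeSol_two_three⟩
  have h4 : (4:ℕ) ∈ {r : ℕ | 1 ≤ r ∧ ¬ tildeSol 2 r} := ⟨by norm_num, not_tildeSol_two_four⟩
  apply le_antisymm
  · exact Nat.sInf_le h4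
  · apply le_csInf ⟨4, h4⟩
    intro r hr
    by_contra hlt
    push_neg at hlt
    have hr3 : r ≤ 3 := by omega
    apply hr.2
    obtain ⟨p, q1, q2, q3, q4, q5, hp, hq, h⟩ := tildeSol_two_three
    exact ⟨p, q1, q2, q3, q4, q5, hp, hq, fun l1 l2 ha hb => h l1 l2 ha (le_trans hb hr3)⟩
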